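/- Let γ ∈ (0,1] and α ≥ 0. Let s, x, y, u, v : (0,∞) → ℝ with s continuous and s(r) > 0 for all r, y differentiable with y(r) ≠ 0 for all r, v differentiable, and r ↦ r u(r)(γ s(r)² + 4α v(r)²) differentiable, satisfying on (0,∞) the equations (U): v' y − v y' + (2y² + (γ/2) s² + 2v²) u = 0 and (I): (r u (γ s² + 4α v²))' + 2r (γ x s² + 4α y u²) v = 0. Assume the function Φ(r) := r u v (γ s² + 4α v²)/y tends to 0 as r → 0⁺ and as r → ∞, Φ' is integrable on (0,∞), and the functions r ↦ 2r{[1 + (v² + (γ/4)s²)/y²](γ s² + 4α v²) + 4α v²} u² and r ↦ 2r (x/y) γ s² v² are integrable on (0,∞). Then ∫₀^∞ 2r{[1 + (v² + (γ/4)s²)/y²](γ s² + 4α v²) + 4α v²} u² dr + ∫₀^∞ 2r (x/y) γ s² v² dr = 0. -/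

import Mathlib

open Set Filter MeasureTheory Topology Real

/-- Integrating the derivative of `Φ = U·V`, with `V = v/y` and `U = r u (γ s² + 4α v²)`,
from `0` to `∞` gives the integral identity of the paper (equation (1.13)). -/
theorem statement4 (γ α : ℝ) (hγ : γ ∈ Set.Ioc (0:ℝ) 1) (hα : 0 ≤ α)
    (s x y u v y' v' U' : ℝ → ℝ)
    (hs : ContinuousOn s (Set.Ioi (0:ℝ)))
    (hspos : ∀ r : ℝ, 0 < r → 0 < s r)
    (hy : ∀ r ∈ Set.Ioi (0:ℝ), HasDerivAt y (y' r) r)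
    (hyne : ∀ r : ℝ, 0 < r → y r ≠ 0)
    (hv : ∀ r ∈ Set.Ioi (0:ℝ), HasDerivAt v (v' r) r)
    (hUd : ∀ r ∈ Set.Ioi (0:ℝ),
      HasDerivAt (fun t => t * u t * (γ * s t ^ 2 + 4 * α * v t ^ 2)) (U' r) r)
    (hUeq : ∀ r ∈ Set.Ioi (0:ℝ),
      v' r * y r - v r * y' r
        + (2 * y r ^ 2 + γ / 2 * s r ^ 2 + 2 * v r ^ 2) * u r = 0)
    (hIeq : ∀ r ∈ Set.Ioi (0:ℝ),
      U' r + 2 * r * (γ * x r * s r ^ 2 + 4 * α * y r * u r ^ 2) * v r = 0)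
    (hΦ0 : Filter.Tendsto
      (fun r => r * u r * v r * (γ * s r ^ 2 + 4 * α * v r ^ 2) / y r)
      (nhdsWithin 0 (Set.Ioi 0)) (nhds 0))
    (hΦinf : Filter.Tendsto
      (fun r => r * u r * v r * (γ * s r ^ 2 + 4 * α * v r ^ 2) / y r)
      Filter.atTop (nhds 0))
    (hΦ' : MeasureTheory.IntegrableOn
      (deriv (fun r => r * u r * v r * (γ * s r ^ 2 + 4 * α * v r ^ 2) / y r))
      (Set.Ioi 0))
    (hint1 : MeasureTheory.IntegrableOn
      (fun r => 2 * r * ((1 + (v r ^ 2 + γ / 4 * s r ^ 2) / y r ^ 2)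
          * (γ * s r ^ 2 + 4 * α * v r ^ 2) + 4 * α * v r ^ 2) * u r ^ 2)
      (Set.Ioi 0))
    (hint2 : MeasureTheory.IntegrableOn
      (fun r => 2 * r * (x r / y r) * γ * s r ^ 2 * v r ^ 2) (Set.Ioi 0)) :
    (∫ r in Set.Ioi (0:ℝ), 2 * r * ((1 + (v r ^ 2 + γ / 4 * s r ^ 2) / y r ^ 2)
          * (γ * s r ^ 2 + 4 * α * v r ^ 2) + 4 * α * v r ^ 2) * u r ^ 2)
      + (∫ r in Set.Ioi (0:ℝ), 2 * r * (x r / y r) * γ * s r ^ 2 * v r ^ 2) = 0 := by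
  set Φ : ℝ → ℝ := fun r => r * u r * v r * (γ * s r ^ 2 + 4 * α * v r ^ 2) / y r with hΦdef
  set f : ℝ → ℝ := fun r => 2 * r * ((1 + (v r ^ 2 + γ / 4 * s r ^ 2) / y r ^ 2)
          * (γ * s r ^ 2 + 4 * α * v r ^ 2) + 4 * α * v r ^ 2) * u r ^ 2 with hfdef
  set g : ℝ → ℝ := fun r => 2 * r * (x r / y r) * γ * s r ^ 2 * v r ^ 2 with hgdef
  -- Φ has derivative -(f+g) on Ioi 0
  have hΦderiv : ∀ r ∈ Set.Ioi (0:ℝ), HasDerivAt Φ (-(f r + g r)) r := by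
    intro r hr
    have hr0 : (0:ℝ) < r := hr
    have hyr := hyne r hr0
    have hdiv : HasDerivAt (fun t => v t / y t)
        ((v' r * y r - v r * y' r) / y r ^ 2) r := (hv r hr).div (hy r hr) hyr
    have hprod := (hUd r hr).mul hdiv
    have hfun : Φ = fun t =>
        (t * u t * (γ * s t ^ 2 + 4 * α * v t ^ 2)) * (v t / y t) := by
      funext t; simp only [hΦdef]; ring
    rw [hfun]
    refine HasDerivAt.congr_deriv hprod ?_
    have e1 : v' r * y r - v r * y' r
        = -((2 * y r ^ 2 + γ / 2 * s r ^ 2 + 2 * v r ^ 2) * u r) := by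
      have := hUeq r hr; linarith
    have e2 : U' r = -(2 * r * (γ * x r * s r ^ 2 + 4 * α * y r * u r ^ 2) * v r) := by
      have := hIeq r hr; linarith
    rw [e1, e2]
    simp only [hfdef, hgdef]
    field_simp
    ring
  -- continuity of Φ at 0 from the right, with Φ 0 = 0
  have hΦ0val : Φ 0 = 0 := by simp [hΦdef]
  have hcont : ContinuousWithinAt Φ (Set.Ici (0:ℝ)) 0 := by
    rw [← Set.Ioi_insert, continuousWithinAt_insert_self]
    unfold ContinuousWithinAt
    rw [hΦ0val]
    exact hΦ0
  -- integrability of -(f+g) on Ioi 0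
  have hmeas : MeasurableSet (Set.Ioi (0:ℝ)) := measurableSet_Ioi
  have hint : MeasureTheory.IntegrableOn (fun r => -(f r + g r)) (Set.Ioi 0) := by
    refine hΦ'.congr_fun (fun r hr => ?_) hmeas
    exact ((hΦderiv r hr).deriv).symm ▸ rfl
  -- FTC on (0, ∞)
  have hFTC : ∫ r in Set.Ioi (0:ℝ), -(f r + g r) = 0 - Φ 0 :=
    MeasureTheory.integral_Ioi_of_hasDerivAt_of_tendsto hcont hΦderiv hint hΦinf
  rw [hΦ0val, sub_zero] at hFTC
  have : ∫ r in Set.Ioi (0:ℝ), -(f r + g r)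
      = -((∫ r in Set.Ioi (0:ℝ), f r) + ∫ r in Set.Ioi (0:ℝ), g r) := by
    rw [MeasureTheory.integral_neg, MeasureTheory.integral_add hint1 hint2]
  rw [this] at hFTC
  linarith
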